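/- Let D be a finite set of positive integers, q : D → ℝ with q_k > 0 for all k ∈ D and Σ_{k∈D} q_k = 1, and δ : D → ℝ with δ_k > 0 for all k. Suppose R := Σ_{k∈D} k q_k / δ_k ≤ 1. Then for any solution x : [0,∞) → (D → ℝ) of the DBMF dynamics, i.e. x_k(t) ∈ [0,1] for all t ≥ 0 and k ∈ D, and for each k the function t ↦ x_k(t) is differentiable with x_k'(t) = −δ_k x_k(t) + (1 − x_k(t)) · k · Σ_{i∈D} q_i x_i(t) for all t ≥ 0, one has x_k(t) → 0 as t → ∞ for every k ∈ D (the disease-free state is globally asymptotically stable). -/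

import Mathlib

open Filter Set Finset

/-- If `R = Σ_k k q_k / δ_k ≤ 1` then along any solution of the
degree-based mean-field SIS dynamics
`x_k'(t) = -δ_k x_k(t) + (1 - x_k(t)) k Σ_i q_i x_i(t)` on `[0,∞)` with values in `[0,1]`,
every coordinate `x_k(t)` tends to `0` as `t → ∞` (the disease-free state is globally
asymptotically stable). -/
theorem disease_free_globally_asymptotically_stable
    (D : Finset ℕ) (hD : ∀ k ∈ D, 0 < k)
    (q : ℕ → ℝ) (hq : ∀ k ∈ D, 0 < q k) (hqsum : ∑ k ∈ D, q k = 1)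
    (δ : ℕ → ℝ) (hδ : ∀ k ∈ D, 0 < δ k)
    (hR : ∑ k ∈ D, (k : ℝ) * q k / δ k ≤ 1)
    (x : ℝ → ℕ → ℝ)
    (hx01 : ∀ t ≥ (0 : ℝ), ∀ k ∈ D, x t k ∈ Set.Icc (0 : ℝ) 1)
    (hdyn : ∀ k ∈ D, ∀ t ≥ (0 : ℝ),
      HasDerivWithinAt (fun s => x s k)
        (-δ k * x t k + (1 - x t k) * (k : ℝ) * ∑ i ∈ D, q i * x t i)
        (Set.Ici (0 : ℝ)) t) :
    ∀ k ∈ D, Filter.Tendsto (fun t => x t k) Filter.atTop (nhds 0) := by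
  intro k hk
  have hne : D.Nonempty := ⟨k, hk⟩
  set m : ℝ := D.inf' hne δ with hm_def
  set M : ℝ := D.sup' hne δ with hM_def
  have hm0 : 0 < m := (Finset.lt_inf'_iff hne).2 hδ
  have hmle : ∀ i ∈ D, m ≤ δ i := fun i hi => Finset.inf'_le δ hi
  have hMle : ∀ i ∈ D, δ i ≤ M := fun i hi => Finset.le_sup' δ hi
  have hM0 : 0 < M := lt_of_lt_of_le (hδ k hk) (hMle k hk)
  set y : ℝ → ℝ := fun t => ∑ i ∈ D, q i * x t i with hy_def
  set V : ℝ → ℝ := fun t => ∑ i ∈ D, q i / δ i * x t i with hV_def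
  set S : ℝ → ℝ := fun t => ∑ i ∈ D, (i : ℝ) * q i / δ i * x t i with hS_def
  set F : ℝ → ℝ := fun t =>
    ∑ i ∈ D, q i / δ i * (-δ i * x t i + (1 - x t i) * (i : ℝ) * y t) with hF_def
  set c : ℝ := m ^ 2 / M with hc_def
  have hc0 : 0 < c := div_pos (pow_pos hm0 2) hM0
  -- basic pointwise facts for t ≥ 0
  have hy0 : ∀ t ≥ (0 : ℝ), 0 ≤ y t := by
    intro t ht
    exact Finset.sum_nonneg fun i hi =>
      mul_nonneg (hq i hi).le (hx01 t ht i hi).1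
  have hV0 : ∀ t ≥ (0 : ℝ), 0 ≤ V t := by
    intro t ht
    exact Finset.sum_nonneg fun i hi =>
      mul_nonneg (div_nonneg (hq i hi).le (hδ i hi).le) (hx01 t ht i hi).1
  have hmV : ∀ t ≥ (0 : ℝ), m * V t ≤ y t := by
    intro t ht
    rw [hV_def, Finset.mul_sum]
    apply Finset.sum_le_sum
    intro i hi
    have hxi : 0 ≤ x t i := (hx01 t ht i hi).1
    have h2 : m / δ i ≤ 1 := (div_le_one (hδ i hi)).2 (hmle i hi)
    calc m * (q i / δ i * x t i) = (q i * x t i) * (m / δ i) := by ring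
      _ ≤ (q i * x t i) * 1 :=
          mul_le_mul_of_nonneg_left h2 (mul_nonneg (hq i hi).le hxi)
      _ = q i * x t i := mul_one _
  have hSy : ∀ t ≥ (0 : ℝ), y t / M ≤ S t := by
    intro t ht
    rw [hS_def, hy_def, Finset.sum_div]
    apply Finset.sum_le_sum
    intro i hi
    have hxi : 0 ≤ x t i := (hx01 t ht i hi).1
    have h1 : (1 : ℝ) ≤ (i : ℝ) := by exact_mod_cast hD i hi
    have hqx : 0 ≤ q i * x t i := mul_nonneg (hq i hi).le hxi
    have key : q i * x t i / M ≤ (i : ℝ) * (q i * x t i) / δ i := by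
      rw [div_le_div_iff₀ hM0 (hδ i hi)]
      nlinarith [mul_le_mul_of_nonneg_left (hMle i hi) hqx,
        mul_le_mul_of_nonneg_right h1 (mul_nonneg hqx hM0.le)]
    calc q i * x t i / M ≤ (i : ℝ) * (q i * x t i) / δ i := key
      _ = (i : ℝ) * q i / δ i * x t i := by ring
  -- the key identity and bound for F
  have hFeq : ∀ t, F t = y t * ((∑ i ∈ D, (i : ℝ) * q i / δ i) - 1 - S t) := by
    intro t
    have : ∀ i ∈ D, q i / δ i * (-δ i * x t i + (1 - x t i) * (i : ℝ) * y t)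
        = (i : ℝ) * q i / δ i * y t - q i * x t i - (i : ℝ) * q i / δ i * x t i * y t := by
      intro i hi
      have hδi := (hδ i hi).ne'
      field_simp
      ring
    rw [hF_def]
    simp only []
    rw [Finset.sum_congr rfl this, Finset.sum_sub_distrib, Finset.sum_sub_distrib,
      ← Finset.sum_mul, ← Finset.sum_mul]
    rw [hy_def, hS_def]
    ring
  have hFle : ∀ t ≥ (0 : ℝ), F t ≤ -c * V t ^ 2 := by
    intro t ht
    have hyt := hy0 t ht
    have h4 := hV0 t ht
    have h3 := hmV t ht
    have hS := hSy t ht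
    have h1 : F t ≤ y t * -S t := by
      rw [hFeq t]
      apply mul_le_mul_of_nonneg_left _ hyt
      linarith [hR]
    have h2 : y t / M * y t ≤ S t * y t := mul_le_mul_of_nonneg_right hS hyt
    have e1 : y t / M * y t = y t * y t / M := by ring
    have h5 : m * V t * (m * V t) ≤ y t * y t :=
      mul_le_mul h3 h3 (mul_nonneg hm0.le h4) hyt
    have h6 : m * V t * (m * V t) / M ≤ y t * y t / M := by gcongr
    calc F t ≤ y t * -S t := h1
      _ ≤ -(y t * y t / M) := by nlinarith [h2, e1]
      _ ≤ -(m * V t * (m * V t) / M) := by linarith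
      _ = -c * V t ^ 2 := by rw [hc_def]; ring
  -- derivative of V
  have hV' : ∀ t ≥ (0 : ℝ), HasDerivWithinAt V (F t) (Set.Ici (0 : ℝ)) t := by
    intro t ht
    rw [hV_def, hF_def]
    exact HasDerivWithinAt.fun_sum fun i hi => (hdyn i hi t ht).const_mul _
  have hVcont : ContinuousOn V (Set.Ici (0 : ℝ)) :=
    fun t ht => (hV' t ht).continuousWithinAt
  -- V is antitone on [0, ∞)
  have hVanti : AntitoneOn V (Set.Ici (0 : ℝ)) := by
    apply antitoneOn_of_hasDerivWithinAt_nonpos (convex_Ici 0) hVcont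
      (f' := F)
    · intro t ht
      rw [interior_Ici] at ht ⊢
      exact (hV' t ht.le).mono Set.Ioi_subset_Ici_self
    · intro t ht
      rw [interior_Ici] at ht
      have := hFle t ht.le
      nlinarith [sq_nonneg (V t), hc0]
  -- limit of V
  set f : ℝ → ℝ := fun t => V (max t 0) with hf_def
  have hfanti : Antitone f := by
    intro a b hab
    exact hVanti (le_max_right a 0) (le_max_right b 0) (max_le_max hab le_rfl)
  have hfbdd : BddBelow (Set.range f) := by
    refine ⟨0, ?_⟩
    rintro _ ⟨t, rfl⟩
    exact hV0 _ (le_max_right t 0)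
  have hflim : Tendsto f atTop (nhds (⨅ t, f t)) := tendsto_atTop_ciInf hfanti hfbdd
  set L : ℝ := ⨅ t, f t with hL_def
  have hL0 : 0 ≤ L := le_ciInf fun t => hV0 _ (le_max_right t 0)
  have hLle : ∀ t ≥ (0 : ℝ), L ≤ V t := by
    intro t ht
    have h := ciInf_le hfbdd t
    have h2 : f t = V t := by show V (max t 0) = V t; rw [max_eq_left ht]
    rw [h2] at h
    exact h
  -- L must be 0
  have hLzero : L = 0 := by
    by_contra hL
    have hLpos : 0 < L := lt_of_le_of_ne hL0 (Ne.symm hL)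
    set c2 : ℝ := c * L ^ 2 with hc2_def
    have hc20 : 0 < c2 := mul_pos hc0 (pow_pos hLpos 2)
    set g : ℝ → ℝ := fun t => V t + c2 * t with hg_def
    have hg' : ∀ t ≥ (0 : ℝ), HasDerivWithinAt g (F t + c2) (Set.Ici (0 : ℝ)) t := by
      intro t ht
      exact (hV' t ht).add (by simpa using (hasDerivWithinAt_id t (Set.Ici (0:ℝ))).const_mul c2)
    have hganti : AntitoneOn g (Set.Ici (0 : ℝ)) := by
      apply antitoneOn_of_hasDerivWithinAt_nonpos (convex_Ici 0)
        (f' := fun t => F t + c2)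
      · exact fun t ht => (hg' t ht).continuousWithinAt
      · intro t ht
        rw [interior_Ici] at ht ⊢
        exact (hg' t ht.le).mono Set.Ioi_subset_Ici_self
      · intro t ht
        rw [interior_Ici] at ht
        have h1 := hFle t ht.le
        have h2 := hLle t ht.le
        have : L ^ 2 ≤ V t ^ 2 := by nlinarith
        have : -c * V t ^ 2 ≤ -c * L ^ 2 := by nlinarith
        rw [hc2_def]
        linarith
    set T : ℝ := V 0 / c2 + 1 with hT_def
    have hT0 : (0 : ℝ) ≤ T := by
      have := hV0 0 le_rfl
      positivity
    have := hganti (Set.self_mem_Ici) hT0 hT0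
    rw [hg_def] at this
    simp only [] at this
    have hexp : c2 * T = V 0 + c2 := by
      rw [hT_def]
      field_simp
    have hVT := hV0 T hT0
    nlinarith
  -- conclude V → 0
  have hVlim : Tendsto V atTop (nhds 0) := by
    rw [← hLzero]
    apply hflim.congr'
    filter_upwards [eventually_ge_atTop (0:ℝ)] with t ht
    rw [hf_def]
    simp [max_eq_left ht]
  -- squeeze for x t k
  have hqk := hq k hk
  have hδk := hδ k hk
  have hkey : ∀ t ≥ (0 : ℝ), x t k ≤ δ k / q k * V t := by
    intro t ht
    have hterm : q k / δ k * x t k ≤ V t := by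
      rw [hV_def]
      apply Finset.single_le_sum (f := fun i => q i / δ i * x t i) _ hk
      intro i hi
      exact mul_nonneg (div_nonneg (hq i hi).le (hδ i hi).le) (hx01 t ht i hi).1
    have h1 : 0 < q k / δ k := div_pos hqk hδk
    rw [← mul_le_mul_iff_right₀ h1]
    calc q k / δ k * x t k ≤ V t := hterm
      _ = q k / δ k * (δ k / q k * V t) := by field_simp
  have hlim2 : Tendsto (fun t => δ k / q k * V t) atTop (nhds 0) := by
    simpa using hVlim.const_mul (δ k / q k)
  apply squeeze_zero' ?_ ?_ hlim2
  · filter_upwards [eventually_ge_atTop (0:ℝ)] with t ht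
    exact (hx01 t ht k hk).1
  · filter_upwards [eventually_ge_atTop (0:ℝ)] with t ht
    exact hkey t ht
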